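/- The operators T_a and T_b on ℓ²(P) are isometries and satisfy: (i) T_a T_b^c = T_b^d T_a; (ii) (T_b)* T_a = T_b^{d-1} T_a ((T_b)*)^c; and (iii) (T_a)* T_b^j T_a = 0 for every integer j with 1 ≤ j < d. -/

import Mathlib

open scoped Classical

namespace BSpaper

/-- The single Baumslag–Solitar relator `a * b^c * (b^d * a)⁻¹` on two generators
(`true` plays the role of `a`, `false` the role of `b`). -/
def rels (c d : ℕ) : Set (FreeGroup Bool) :=
  {FreeGroup.of true * FreeGroup.of false ^ c * (FreeGroup.of false ^ d * FreeGroup.of true)⁻¹}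

/-- The Baumslag–Solitar group `BS(c,d) = ⟨a, b ∣ a b^c = b^d a⟩`. -/
abbrev Grp (c d : ℕ) := PresentedGroup (rels c d)

variable (c d : ℕ)

/-- The generator `a`. -/
def a : Grp c d := PresentedGroup.of true

/-- The generator `b`. -/
def b : Grp c d := PresentedGroup.of false

/-- The submonoid `P` of `BS(c,d)` generated by `a` and `b`. -/
def P : Submonoid (Grp c d) := Submonoid.closure {a c d, b c d}

/-- The word `b^{s₀} a b^{s₁} a ⋯ b^{s_{k-1}} a` associated to a list of digits `s_i < d`. -/
def wordStem : List (Fin d) → Grp c d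
  | [] => 1
  | i :: l => b c d ^ (i : ℕ) * a c d * wordStem l

/-- `Σ_k`: the set of stems of height `k`. -/
def SigmaSet (k : ℕ) : Set (Grp c d) :=
  {g | ∃ l : List (Fin d), l.length = k ∧ wordStem c d l = g}

/-- The data `(l, t)` of a normal-form decomposition `x = (b^{s₀} a ⋯ b^{s_{k-1}} a) * b^t`,
chosen by choice when it exists (it exists, uniquely, for every `x ∈ P`). -/
noncomputable def nf (x : Grp c d) : List (Fin d) × ℕ :=
  if h : ∃ p : List (Fin d) × ℕ, x = wordStem c d p.1 * b c d ^ p.2 then h.choose else ([], 0)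

/-- The stem of `x`, i.e. the stem part of the normal form of `x`. -/
noncomputable def stem (x : Grp c d) : Grp c d := wordStem c d (nf c d x).1

/-- The left-invariant partial order on `BS(c,d)`: `g ≤ h` iff `g⁻¹ * h ∈ P`. -/
def bsLe (g h : Grp c d) : Prop := g⁻¹ * h ∈ P c d

lemma a_mem_P : a c d ∈ P c d := Submonoid.subset_closure (Set.mem_insert _ _)

lemma b_mem_P : b c d ∈ P c d :=
  Submonoid.subset_closure (Set.mem_insert_of_mem _ rfl)

lemma wordStem_mem_P (l : List (Fin d)) : wordStem c d l ∈ P c d := by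
  induction l with
  | nil => exact one_mem _
  | cons i l ih =>
      exact mul_mem (mul_mem (pow_mem (b_mem_P c d) _) (a_mem_P c d)) ih

/-- `a` as an element of the submonoid `P`. -/
def aP : P c d := ⟨a c d, a_mem_P c d⟩

/-- `b` as an element of the submonoid `P`. -/
def bP : P c d := ⟨b c d, b_mem_P c d⟩

/-- `ℓ²(P)`, the Hilbert space of square-summable families indexed by `P`. -/
noncomputable abbrev l2P := lp (fun _ : P c d => ℂ) 2

lemma rel : a c d * b c d ^ c = b c d ^ d * a c d := by
  have h : ((QuotientGroup.mk (FreeGroup.of true * FreeGroup.of false ^ c *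
      (FreeGroup.of false ^ d * FreeGroup.of true)⁻¹)) : Grp c d) = 1 := by
    rw [QuotientGroup.eq_one_iff]
    exact Subgroup.subset_normalClosure rfl
  simp only [QuotientGroup.mk_mul, QuotientGroup.mk_inv, QuotientGroup.mk_pow,
    mul_inv_eq_one] at h
  exact h

lemma rel_pow (k : ℕ) : a c d * b c d ^ (c * k) = b c d ^ (d * k) * a c d := by
  induction k with
  | zero => simp
  | succ k ih =>
      rw [Nat.mul_succ, Nat.mul_succ, pow_add, pow_add, ← mul_assoc, ih,
        mul_assoc, rel, ← mul_assoc]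


abbrev Letter := Bool × ℕ

def okE (c d : ℕ) : Letter → Prop
  | (true, r) => r < c
  | (false, r) => r < d

def okP (x y : Letter) : Prop := x.1 = y.1 ∨ x.2 ≠ 0

def Ok (c d : ℕ) (x : ℤ × List Letter) : Prop :=
  (∀ e ∈ x.2, okE c d e) ∧ x.2.Chain' okP

def araw (c d : ℕ) : ℤ × List Letter → ℤ × List Letter
  | (m, []) => ((d : ℤ) * (m / c), [(true, (m % c).toNat)])
  | (m, (true, s) :: l) => ((d : ℤ) * (m / c), (true, (m % c).toNat) :: (true, s) :: l)
  | (m, (false, s) :: l) =>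
      if m % (c : ℤ) = 0 then ((d : ℤ) * (m / c) + s, l)
      else ((d : ℤ) * (m / c), (true, (m % c).toNat) :: (false, s) :: l)

def airaw (c d : ℕ) : ℤ × List Letter → ℤ × List Letter
  | (m, []) => ((c : ℤ) * (m / d), [(false, (m % d).toNat)])
  | (m, (false, s) :: l) => ((c : ℤ) * (m / d), (false, (m % d).toNat) :: (false, s) :: l)
  | (m, (true, s) :: l) =>
      if m % (d : ℤ) = 0 then ((c : ℤ) * (m / d) + s, l)
      else ((c : ℤ) * (m / d), (false, (m % d).toNat) :: (true, s) :: l)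

variable {c d : ℕ}

lemma emod_facts (hc : 0 < c) (m : ℤ) : 0 ≤ m % (c : ℤ) ∧ m % (c : ℤ) < c :=
  ⟨Int.emod_nonneg m (by exact_mod_cast hc.ne'), Int.emod_lt_of_pos m (by exact_mod_cast hc)⟩

lemma araw_ok (hc : 0 < c) (hd : 0 < d) {x : ℤ × List Letter} (h : Ok c d x) :
    Ok c d (araw c d x) := by
  obtain ⟨m, l⟩ := x
  obtain ⟨hm1, hm2⟩ := emod_facts hc m
  match l with
  | [] =>
      refine ⟨?_, by simp [araw, List.Chain', List.isChain_singleton]⟩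
      simp only [araw, List.mem_singleton]
      rintro e rfl
      show (m % (c : ℤ)).toNat < c
      omega
  | (true, s) :: l' =>
      obtain ⟨he, hch⟩ := h
      refine ⟨?_, ?_⟩
      · simp only [araw]
        intro e he'
        rcases List.mem_cons.mp he' with rfl | hmem
        · show (m % (c : ℤ)).toNat < c; omega
        · exact he e hmem
      · simp only [araw]
        simp only [List.Chain', List.isChain_cons_cons]
        exact ⟨Or.inl rfl, hch⟩
  | (false, s) :: l' =>
      obtain ⟨he, hch⟩ := h
      by_cases h0 : m % (c : ℤ) = 0
      · simp only [araw, if_pos h0]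
        exact ⟨fun e he' => he e (List.mem_cons_of_mem _ he'), hch.tail⟩
      · simp only [araw, if_neg h0]
        refine ⟨?_, ?_⟩
        · intro e he'
          rcases List.mem_cons.mp he' with rfl | hmem
          · show (m % (c : ℤ)).toNat < c; omega
          · exact he e hmem
        · simp only [List.Chain', List.isChain_cons_cons]
          exact ⟨Or.inr (by omega), hch⟩

lemma airaw_ok (hc : 0 < c) (hd : 0 < d) {x : ℤ × List Letter} (h : Ok c d x) :
    Ok c d (airaw c d x) := by
  obtain ⟨m, l⟩ := x
  obtain ⟨hm1, hm2⟩ := emod_facts hd m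
  match l with
  | [] =>
      refine ⟨?_, by simp [airaw, List.Chain', List.isChain_singleton]⟩
      simp only [airaw, List.mem_singleton]
      rintro e rfl
      show (m % (d : ℤ)).toNat < d
      omega
  | (false, s) :: l' =>
      obtain ⟨he, hch⟩ := h
      refine ⟨?_, ?_⟩
      · simp only [airaw]
        intro e he'
        rcases List.mem_cons.mp he' with rfl | hmem
        · show (m % (d : ℤ)).toNat < d; omega
        · exact he e hmem
      · simp only [airaw]
        simp only [List.Chain', List.isChain_cons_cons]
        exact ⟨Or.inl rfl, hch⟩
  | (true, s) :: l' =>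
      obtain ⟨he, hch⟩ := h
      by_cases h0 : m % (d : ℤ) = 0
      · simp only [airaw, if_pos h0]
        exact ⟨fun e he' => he e (List.mem_cons_of_mem _ he'), hch.tail⟩
      · simp only [airaw, if_neg h0]
        refine ⟨?_, ?_⟩
        · intro e he'
          rcases List.mem_cons.mp he' with rfl | hmem
          · show (m % (d : ℤ)).toNat < d; omega
          · exact he e hmem
        · simp only [List.Chain', List.isChain_cons_cons]
          exact ⟨Or.inr (by omega), hch⟩

lemma airaw_araw (hc : 0 < c) (hd : 0 < d) {m : ℤ} {l : List Letter}
    (h : Ok c d (m, l)) : airaw c d (araw c d (m, l)) = (m, l) := by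
  have hc' : (c : ℤ) ≠ 0 := by exact_mod_cast hc.ne'
  have hd' : (d : ℤ) ≠ 0 := by exact_mod_cast hd.ne'
  obtain ⟨hm1, hm2⟩ := emod_facts hc m
  have key : (c : ℤ) * (m / c) + m % c = m := Int.mul_ediv_add_emod m c
  have htn : (((m % (c : ℤ)).toNat : ℤ)) = m % c := Int.toNat_of_nonneg hm1
  have hdq0 : ∀ q : ℤ, (d : ℤ) * q % d = 0 := fun q => Int.mul_emod_right _ _
  have hdqq : ∀ q : ℤ, (d : ℤ) * q / d = q := fun q => Int.mul_ediv_cancel_left q hd'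
  match l with
  | [] =>
      simp only [araw, airaw]
      rw [if_pos (hdq0 _), hdqq, htn, key]
  | (true, s) :: l' =>
      simp only [araw, airaw]
      rw [if_pos (hdq0 _), hdqq, htn, key]
  | (false, s) :: l' =>
      have hs : s < d := h.1 (false, s) List.mem_cons_self
      by_cases h0 : m % (c : ℤ) = 0
      · -- cancellation case
        have h1 : ((d : ℤ) * (m / c) + s) % d = s := by
          rw [add_comm, Int.add_mul_emod_self_left,
            Int.emod_eq_of_lt (by positivity) (by exact_mod_cast hs)]
        have h2 : ((d : ℤ) * (m / c) + s) / d = m / c := by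
          rw [add_comm, mul_comm, Int.add_mul_ediv_right _ _ hd',
            Int.ediv_eq_zero_of_lt (by positivity) (by exact_mod_cast hs), zero_add]
        have hm : m = (c : ℤ) * (m / c) := by omega
        simp only [araw, if_pos h0]
        match l' with
        | [] =>
            simp only [airaw]
            rw [h1, h2, ← hm]
            simp
        | (false, s₂) :: l'' =>
            simp only [airaw]
            rw [h1, h2, ← hm]
            simp
        | (true, s₂) :: l'' =>
            have hok : okP (false, s) (true, s₂) := (List.isChain_cons_cons.mp h.2).1
            have hs0 : s ≠ 0 := by
              rcases hok with h' | h'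
              · exact absurd h' (by simp)
              · exact h'
            have hcond : ¬ ((d : ℤ) * (m / c) + s) % d = 0 := by
              rw [h1]; exact_mod_cast hs0
            simp only [airaw]
            rw [if_neg hcond, h1, h2, ← hm]
            simp
      · simp only [araw, if_neg h0, airaw]
        rw [if_pos (hdq0 _), hdqq, htn, key]

lemma araw_airaw (hc : 0 < c) (hd : 0 < d) {m : ℤ} {l : List Letter}
    (h : Ok c d (m, l)) : araw c d (airaw c d (m, l)) = (m, l) := by
  have hc' : (c : ℤ) ≠ 0 := by exact_mod_cast hc.ne'
  have hd' : (d : ℤ) ≠ 0 := by exact_mod_cast hd.ne'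
  obtain ⟨hm1, hm2⟩ := emod_facts hd m
  have key : (d : ℤ) * (m / d) + m % d = m := Int.mul_ediv_add_emod m d
  have htn : (((m % (d : ℤ)).toNat : ℤ)) = m % d := Int.toNat_of_nonneg hm1
  have hdq0 : ∀ q : ℤ, (c : ℤ) * q % c = 0 := fun q => Int.mul_emod_right _ _
  have hdqq : ∀ q : ℤ, (c : ℤ) * q / c = q := fun q => Int.mul_ediv_cancel_left q hc'
  match l with
  | [] =>
      simp only [airaw, araw]
      rw [if_pos (hdq0 _), hdqq, htn, key]
  | (false, s) :: l' =>
      simp only [airaw, araw]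
      rw [if_pos (hdq0 _), hdqq, htn, key]
  | (true, s) :: l' =>
      have hs : s < c := h.1 (true, s) List.mem_cons_self
      by_cases h0 : m % (d : ℤ) = 0
      · have h1 : ((c : ℤ) * (m / d) + s) % c = s := by
          rw [add_comm, Int.add_mul_emod_self_left,
            Int.emod_eq_of_lt (by positivity) (by exact_mod_cast hs)]
        have h2 : ((c : ℤ) * (m / d) + s) / c = m / d := by
          rw [add_comm, mul_comm, Int.add_mul_ediv_right _ _ hc',
            Int.ediv_eq_zero_of_lt (by positivity) (by exact_mod_cast hs), zero_add]
        have hm : m = (d : ℤ) * (m / d) := by omega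
        simp only [airaw, if_pos h0]
        match l' with
        | [] =>
            simp only [araw]
            rw [h1, h2, ← hm]
            simp
        | (true, s₂) :: l'' =>
            simp only [araw]
            rw [h1, h2, ← hm]
            simp
        | (false, s₂) :: l'' =>
            have hok : okP (true, s) (false, s₂) := (List.isChain_cons_cons.mp h.2).1
            have hs0 : s ≠ 0 := by
              rcases hok with h' | h'
              · exact absurd h' (by simp)
              · exact h'
            have hcond : ¬ ((c : ℤ) * (m / d) + s) % c = 0 := by
              rw [h1]; exact_mod_cast hs0
            simp only [araw]
            rw [if_neg hcond, h1, h2, ← hm]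
            simp
      · simp only [airaw, if_neg h0, araw]
        rw [if_pos (hdq0 _), hdqq, htn, key]

lemma araw_addc (hc : 0 < c) (m : ℤ) (l : List Letter) :
    araw c d (m + c, l) = ((araw c d (m, l)).1 + d, (araw c d (m, l)).2) := by
  have hc' : (c : ℤ) ≠ 0 := by exact_mod_cast hc.ne'
  have e1 : (m + c) % (c : ℤ) = m % c := by
    conv_lhs => rw [show m + (c : ℤ) = m + 1 * c by ring]
    exact Int.add_mul_emod_self_right _ _ _
  have e2 : (m + c) / (c : ℤ) = m / c + 1 := by
    conv_lhs => rw [show m + (c : ℤ) = m + 1 * c by ring]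
    exact Int.add_mul_ediv_right _ _ hc'
  match l with
  | [] =>
      simp only [araw, e1, e2]
      exact congrArg₂ Prod.mk (by ring) rfl
  | (true, s) :: l' =>
      simp only [araw, e1, e2]
      exact congrArg₂ Prod.mk (by ring) rfl
  | (false, s) :: l' =>
      by_cases h0 : m % (c : ℤ) = 0
      · simp only [araw, e1, if_pos h0, e2]
        exact congrArg₂ Prod.mk (by ring) rfl
      · simp only [araw, e1, if_neg h0, e2]
        exact congrArg₂ Prod.mk (by ring) rfl
variable (c d) in
abbrev X := {x : ℤ × List Letter // Ok c d x}

def aPerm (hc : 0 < c) (hd : 0 < d) : Equiv.Perm (X c d) where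
  toFun x := ⟨araw c d x.1, araw_ok hc hd x.2⟩
  invFun x := ⟨airaw c d x.1, airaw_ok hc hd x.2⟩
  left_inv x := Subtype.ext (by
    obtain ⟨⟨m, l⟩, hx⟩ := x
    exact airaw_araw hc hd hx)
  right_inv x := Subtype.ext (by
    obtain ⟨⟨m, l⟩, hx⟩ := x
    exact araw_airaw hc hd hx)

variable (c d) in
def bPerm : Equiv.Perm (X c d) where
  toFun x := ⟨(x.1.1 + 1, x.1.2), x.2⟩
  invFun x := ⟨(x.1.1 - 1, x.1.2), x.2⟩
  left_inv x := Subtype.ext (congrArg₂ Prod.mk (by ring) rfl)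
  right_inv x := Subtype.ext (congrArg₂ Prod.mk (by ring) rfl)

lemma bPerm_pow (k : ℕ) (x : X c d) :
    ((bPerm c d ^ k) x).1 = (x.1.1 + (k : ℤ), x.1.2) := by
  induction k with
  | zero => simp
  | succ k ih =>
      rw [pow_succ', Equiv.Perm.mul_apply]
      show ((((bPerm c d) ^ k) x).1.1 + 1, (((bPerm c d) ^ k) x).1.2)
          = (x.1.1 + ((k : ℤ) + 1), x.1.2)
      have h1 : (((bPerm c d) ^ k) x).1.1 = x.1.1 + (k : ℤ) := by rw [ih]
      have h2 : (((bPerm c d) ^ k) x).1.2 = x.1.2 := by rw [ih]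
      rw [h1, h2, add_assoc]

lemma aPerm_bPerm_rel (hc : 0 < c) (hd : 0 < d) :
    aPerm hc hd * bPerm c d ^ c = bPerm c d ^ d * aPerm hc hd := by
  apply Equiv.ext
  intro x
  rw [Equiv.Perm.mul_apply, Equiv.Perm.mul_apply]
  apply Subtype.ext
  show araw c d (((bPerm c d ^ c) x).1) = ((bPerm c d ^ d) (aPerm hc hd x)).1
  rw [bPerm_pow, bPerm_pow]
  show araw c d (x.1.1 + (c : ℤ), x.1.2) = ((araw c d x.1).1 + (d : ℤ), (araw c d x.1).2)
  exact araw_addc hc x.1.1 x.1.2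

lemma relhold (hc : 0 < c) (hd : 0 < d) :
    ∀ r ∈ rels c d, FreeGroup.lift (fun t => cond t (aPerm hc hd) (bPerm c d)) r = 1 := by
  intro r hr
  rw [rels, Set.mem_singleton_iff] at hr
  subst hr
  simp only [map_mul, map_inv, map_pow, FreeGroup.lift_apply_of, Bool.cond_true, Bool.cond_false]
  rw [mul_inv_eq_one]
  exact aPerm_bPerm_rel hc hd

def phi (hc : 0 < c) (hd : 0 < d) : Grp c d →* Equiv.Perm (X c d) :=
  PresentedGroup.toGroup (relhold hc hd)

lemma phi_a (hc : 0 < c) (hd : 0 < d) : phi hc hd (a c d) = aPerm hc hd :=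
  PresentedGroup.toGroup.of (relhold hc hd)

lemma phi_b (hc : 0 < c) (hd : 0 < d) : phi hc hd (b c d) = bPerm c d :=
  PresentedGroup.toGroup.of (relhold hc hd)

variable (c d) in
def basept : X c d := ⟨(0, []), ⟨by simp, by simp [List.Chain', List.isChain_nil]⟩⟩

/-- the `X`-point attached to a group element. -/
def NFX (hc : 0 < c) (hd : 0 < d) (g : Grp c d) : X c d := phi hc hd g (basept c d)

lemma NFX_mul (hc : 0 < c) (hd : 0 < d) (g h : Grp c d) :
    NFX hc hd (g * h) = phi hc hd g (NFX hc hd h) := by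
  rw [NFX, map_mul, Equiv.Perm.mul_apply, NFX]

def GoodX (x : X c d) : Prop := 0 ≤ x.1.1 ∧ ∀ e ∈ x.1.2, e.1 = true

lemma araw_allTrue {m : ℤ} {l : List Letter} (hl : ∀ e ∈ l, e.1 = true) :
    araw c d (m, l) = ((d : ℤ) * (m / c), (true, (m % (c : ℤ)).toNat) :: l) := by
  match l with
  | [] => rfl
  | (true, s) :: l' => rfl
  | (false, s) :: l' =>
      exact absurd (hl (false, s) List.mem_cons_self) (by simp)

lemma aPerm_apply_allTrue (hc : 0 < c) (hd : 0 < d) {x : X c d}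
    (hl : ∀ e ∈ x.1.2, e.1 = true) :
    (aPerm hc hd x).1 =
      ((d : ℤ) * (x.1.1 / c), (true, (x.1.1 % (c : ℤ)).toNat) :: x.1.2) :=
  araw_allTrue hl

lemma goodP (hc : 0 < c) (hd : 0 < d) :
    ∀ p ∈ P c d, GoodX (NFX hc hd p) := by
  intro p hp
  induction hp using Submonoid.closure_induction_left with
  | one =>
      rw [NFX, map_one]
      exact ⟨le_refl 0, fun e he => absurd he List.not_mem_nil⟩
  | mul_left x hx y hy ih =>
      rcases hx with rfl | hx
      · -- x = a
        rw [NFX_mul, phi_a]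
        obtain ⟨ih1, ih2⟩ := ih
        constructor
        · show 0 ≤ ((aPerm hc hd (NFX hc hd y)).1).1
          rw [aPerm_apply_allTrue hc hd ih2]
          have : 0 ≤ (NFX hc hd y).1.1 / (c : ℤ) := Int.ediv_nonneg ih1 (by positivity)
          positivity
        · intro e he
          rw [show ((aPerm hc hd (NFX hc hd y)).1).2
              = (true, ((NFX hc hd y).1.1 % (c : ℤ)).toNat) :: (NFX hc hd y).1.2 from
            congrArg Prod.snd (aPerm_apply_allTrue hc hd ih2)] at he
          rcases List.mem_cons.mp he with rfl | hmem
          · rfl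
          · exact ih2 e hmem
      · -- x = b
        rw [Set.mem_singleton_iff] at hx
        subst hx
        rw [NFX_mul, phi_b]
        obtain ⟨ih1, ih2⟩ := ih
        exact ⟨by show 0 ≤ (NFX hc hd y).1.1 + 1; omega, ih2⟩
lemma NFX_a_fst (hc : 0 < c) (hd : 0 < d) {y : Grp c d} (hy : y ∈ P c d) :
    (NFX hc hd (a c d * y)).1.1 = (d : ℤ) * ((NFX hc hd y).1.1 / c) := by
  rw [NFX_mul, phi_a]
  have h := aPerm_apply_allTrue hc hd (x := NFX hc hd y) (goodP hc hd y hy).2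
  rw [h]

lemma NFX_b_fst (hc : 0 < c) (hd : 0 < d) (g : Grp c d) :
    (NFX hc hd (b c d * g)).1.1 = (NFX hc hd g).1.1 + 1 := by
  rw [NFX_mul, phi_b]; rfl

lemma NFX_bpow_fst (hc : 0 < c) (hd : 0 < d) (j : ℕ) (g : Grp c d) :
    (NFX hc hd (b c d ^ j * g)).1.1 = (NFX hc hd g).1.1 + j := by
  rw [NFX_mul, map_pow, phi_b, bPerm_pow]

lemma ediv_le_self' (hc : 0 < c) (t : ℤ) : (c : ℤ) * (t / c) ≤ t := by
  have h1 := Int.mul_ediv_add_emod t c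
  have h2 := (emod_facts hc t).1
  linarith

lemma pushP (hc : 0 < c) (hd : 0 < d) :
    ∀ p ∈ P c d, ∀ n : ℕ, (n : ℤ) ≤ (NFX hc hd p).1.1 → ∃ q ∈ P c d, p = b c d ^ n * q := by
  intro p hp
  induction hp using Submonoid.closure_induction_left with
  | one =>
      intro n hn
      have h0 : (NFX hc hd 1).1.1 = 0 := by rw [NFX, map_one]; rfl
      rw [h0] at hn
      have : n = 0 := by omega
      subst this
      exact ⟨1, one_mem _, by simp⟩
  | mul_left x hx y hy ih =>
      rcases hx with rfl | hx
      · -- x = a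
        intro n hn
        have hg := goodP hc hd y hy
        rw [NFX_a_fst hc hd hy] at hn
        set t := (NFX hc hd y).1.1 with ht
        have hq0 : 0 ≤ t / (c : ℤ) := Int.ediv_nonneg hg.1 (by positivity)
        set k := (t / (c : ℤ)).toNat with hk
        have hkz : (k : ℤ) = t / c := Int.toNat_of_nonneg hq0
        have hck : ((c * k : ℕ) : ℤ) ≤ t := by
          push_cast
          rw [hkz]
          exact ediv_le_self' hc t
        obtain ⟨q, hqP, hyq⟩ := ih (c * k) hck
        have hnk : n ≤ d * k := by
          have : (n : ℤ) ≤ (d : ℤ) * k := by rw [hkz]; exact hn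
          exact_mod_cast this
        refine ⟨b c d ^ (d * k - n) * (a c d * q),
          mul_mem (pow_mem (b_mem_P c d) _) (mul_mem (a_mem_P c d) hqP), ?_⟩
        calc a c d * y = a c d * (b c d ^ (c * k) * q) := by rw [hyq]
          _ = (a c d * b c d ^ (c * k)) * q := by rw [mul_assoc]
          _ = (b c d ^ (d * k) * a c d) * q := by rw [rel_pow]
          _ = b c d ^ n * (b c d ^ (d * k - n) * (a c d * q)) := by
              conv_lhs =>
                rw [show d * k = n + (d * k - n) from (Nat.add_sub_cancel' hnk).symm, pow_add]
              rw [mul_assoc, mul_assoc]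
      · -- x = b
        rw [Set.mem_singleton_iff] at hx
        subst hx
        intro n hn
        rw [NFX_b_fst hc hd] at hn
        match n with
        | 0 => exact ⟨b c d * y, mul_mem (b_mem_P c d) hy, by simp⟩
        | Nat.succ n =>
            obtain ⟨q, hqP, hyq⟩ := ih n (by push_cast at hn ⊢; omega)
            exact ⟨q, hqP, by rw [hyq, pow_succ', mul_assoc]⟩

lemma sep2 (hc : 0 < c) (hd : 0 < d) {j : ℕ} (hj1 : 1 ≤ j) (hj2 : j < d)
    {y z : Grp c d} (hy : y ∈ P c d) (hz : z ∈ P c d) :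
    a c d * z ≠ b c d ^ j * (a c d * y) := by
  intro h
  have h' := congrArg (fun g => (NFX hc hd g).1.1) h
  simp only [NFX_a_fst hc hd hz, NFX_bpow_fst hc hd, NFX_a_fst hc hd hy] at h'
  set q1 := (NFX hc hd y).1.1 / (c : ℤ) with hq1
  set q2 := (NFX hc hd z).1.1 / (c : ℤ) with hq2
  have hgy := goodP hc hd y hy
  have hgz := goodP hc hd z hz
  have hq1' : 0 ≤ q1 := Int.ediv_nonneg hgy.1 (by positivity)
  have hq2' : 0 ≤ q2 := Int.ediv_nonneg hgz.1 (by positivity)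
  -- h' : d * q2 = d * q1 + j
  have hde : (d : ℤ) * (q2 - q1) = j := by rw [mul_sub]; omega
  rcases le_or_gt (q2 - q1) 0 with he | he
  · have : (d : ℤ) * (q2 - q1) ≤ 0 := mul_nonpos_of_nonneg_of_nonpos (by positivity) he
    have hj : (1 : ℤ) ≤ j := by exact_mod_cast hj1
    omega
  · have h1 : (1 : ℤ) ≤ q2 - q1 := he
    have : (d : ℤ) * 1 ≤ (d : ℤ) * (q2 - q1) :=
      mul_le_mul_of_nonneg_left h1 (by positivity)
    have hj : (j : ℤ) < d := by exact_mod_cast hj2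
    omega

lemma sep1 (hc : 0 < c) (hd : 0 < d) {y : Grp c d} (hy : y ∈ P c d)
    (hp : (b c d)⁻¹ * (a c d * y) ∈ P c d) : ∃ q ∈ P c d, y = b c d ^ c * q := by
  have hgp := goodP hc hd _ hp
  have hb : b c d * ((b c d)⁻¹ * (a c d * y)) = a c d * y := by group
  have e2 : (NFX hc hd (a c d * y)).1.1
      = (NFX hc hd ((b c d)⁻¹ * (a c d * y))).1.1 + 1 := by
    conv_lhs => rw [← hb]
    exact NFX_b_fst hc hd _
  have e1 : (NFX hc hd (a c d * y)).1.1 = (d : ℤ) * ((NFX hc hd y).1.1 / c) :=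
    NFX_a_fst hc hd hy
  set t := (NFX hc hd y).1.1 with ht
  have h1 : 1 ≤ (d : ℤ) * (t / c) := by
    rw [← e1, e2]
    have := hgp.1
    omega
  have hq : 1 ≤ t / (c : ℤ) := by
    by_contra hcon
    push_neg at hcon
    have hle : t / (c : ℤ) ≤ 0 := by omega
    have : (d : ℤ) * (t / c) ≤ 0 := mul_nonpos_of_nonneg_of_nonpos (by positivity) hle
    omega
  have hct : ((c : ℕ) : ℤ) ≤ t := by
    have h2 : (c : ℤ) * 1 ≤ (c : ℤ) * (t / c) :=
      mul_le_mul_of_nonneg_left hq (by positivity)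
    have h3 := ediv_le_self' hc t
    push_cast
    linarith
  exact pushP hc hd y hy c hct

section Analysis
set_option synthInstance.maxHeartbeats 1000000
set_option maxHeartbeats 1000000

open ContinuousLinearMap

variable {c d : ℕ}

local notation "⟪" x ", " y "⟫" => @inner ℂ _ _ x y

lemma coord (f : l2P c d) (z : P c d) :
    ⟪(lp.single 2 z 1 : l2P c d), f⟫ = f z := by
  rw [lp.inner_single_left, RCLike.inner_apply, map_one, mul_one]

lemma single_val (w z : P c d) :
    (lp.single 2 w (1 : ℂ) : l2P c d) z = if z = w then 1 else 0 := by
  by_cases h : z = w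
  · subst h; simp [lp.single_apply]
  · simp [lp.single_apply, h]

lemma dense_singles :
    Dense (Submodule.span ℂ
      (Set.range fun y : P c d => (lp.single 2 y 1 : l2P c d)) : Set (l2P c d)) := by
  intro f
  have hs := lp.hasSum_single (E := fun _ : P c d => ℂ) ENNReal.ofNat_ne_top f
  refine mem_closure_of_tendsto hs (Filter.Eventually.of_forall fun s => ?_)
  refine Submodule.sum_mem _ fun i _ => ?_
  have h1 : (lp.single 2 i (f i) : l2P c d) = (f i) • lp.single 2 i 1 := by
    rw [← lp.single_smul]
    congr 1
    rw [smul_eq_mul, mul_one]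
  rw [h1]
  exact Submodule.smul_mem _ _ (Submodule.subset_span ⟨i, rfl⟩)

lemma Text {S₁ S₂ : l2P c d →L[ℂ] l2P c d}
    (h : ∀ y : P c d, S₁ (lp.single 2 y 1) = S₂ (lp.single 2 y 1)) : S₁ = S₂ := by
  apply ContinuousLinearMap.ext_on dense_singles
  rintro x ⟨y, rfl⟩
  exact h y

lemma adj_apply_coord (S : l2P c d →L[ℂ] l2P c d) (v : l2P c d) (z : P c d) :
    (ContinuousLinearMap.adjoint S v) z = ⟪S (lp.single 2 z 1), v⟫ := by
  rw [← coord, ContinuousLinearMap.adjoint_inner_right]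

variable (T : P c d → (l2P c d →L[ℂ] l2P c d))
variable (hT : ∀ x y : P c d, T x (lp.single 2 y 1) = lp.single 2 (x * y) 1)

include hT

lemma Tpow (x : P c d) (k : ℕ) (y : P c d) :
    ((T x) ^ k) (lp.single 2 y 1) = lp.single 2 (x ^ k * y) 1 := by
  induction k with
  | zero => simp
  | succ k ih =>
      rw [pow_succ', ContinuousLinearMap.mul_apply, ih, hT, pow_succ', mul_assoc]

lemma isom (x : P c d) (hx : ∀ z w : P c d, x * z = x * w → z = w) :
    ContinuousLinearMap.adjoint (T x) * T x = 1 := by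
  apply Text
  intro y
  rw [ContinuousLinearMap.mul_apply, hT, ContinuousLinearMap.one_apply]
  apply lp.ext
  funext z
  rw [adj_apply_coord, hT, coord, single_val, single_val]
  by_cases h : z = y
  · subst h; rw [if_pos rfl, if_pos rfl]
  · rw [if_neg h, if_neg (fun hh => h (hx z y hh))]

lemma Tadj_single (x w : P c d) :
    ContinuousLinearMap.adjoint (T x) (lp.single 2 w 1)
      = if h : (x : Grp c d)⁻¹ * (w : Grp c d) ∈ P c d
        then (lp.single 2 (⟨_, h⟩ : P c d) 1 : l2P c d) else 0 := by
  apply lp.ext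
  funext z
  rw [adj_apply_coord, hT, coord, single_val]
  by_cases h : (x : Grp c d)⁻¹ * (w : Grp c d) ∈ P c d
  · rw [dif_pos h, single_val]
    by_cases hz : z = (⟨_, h⟩ : P c d)
    · rw [if_pos hz, if_pos]
      rw [hz]
      exact Subtype.ext (by simp)
    · rw [if_neg hz, if_neg]
      intro hh
      apply hz
      apply Subtype.ext
      have : (x : Grp c d) * z = w := by exact_mod_cast congrArg Subtype.val hh
      simp [← this]
  · rw [dif_neg h]
    rw [if_neg]
    · rfl
    · intro hh
      apply h
      have : (x : Grp c d) * z = w := by exact_mod_cast congrArg Subtype.val hh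
      rw [← this, inv_mul_cancel_left]
      exact z.2

lemma Tadj_pow (k : ℕ) (x : P c d) :
    ((ContinuousLinearMap.adjoint (T (bP c d))) ^ k) (lp.single 2 x 1)
      = if h : ((b c d) ^ k)⁻¹ * (x : Grp c d) ∈ P c d
        then (lp.single 2 (⟨_, h⟩ : P c d) 1 : l2P c d) else 0 := by
  induction k with
  | zero =>
      have hx0 : ((b c d) ^ 0)⁻¹ * (x : Grp c d) ∈ P c d := by simpa using x.2
      rw [pow_zero, ContinuousLinearMap.one_apply, dif_pos hx0]
      congr 1
      exact Subtype.ext (by simp)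
  | succ k ih =>
      have key : (b c d)⁻¹ * (((b c d) ^ k)⁻¹ * (x : Grp c d))
          = ((b c d) ^ (k + 1))⁻¹ * (x : Grp c d) := by
        rw [pow_succ]
        group
      rw [pow_succ', ContinuousLinearMap.mul_apply, ih]
      by_cases hk : ((b c d) ^ k)⁻¹ * (x : Grp c d) ∈ P c d
      · rw [dif_pos hk, Tadj_single T hT (bP c d) ⟨_, hk⟩]
        by_cases h1 : ((b c d) ^ (k + 1))⁻¹ * (x : Grp c d) ∈ P c d
        · have hc1 : ((bP c d : P c d) : Grp c d)⁻¹ * ((⟨_, hk⟩ : P c d) : Grp c d)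
              ∈ P c d := by
            show (b c d)⁻¹ * (((b c d) ^ k)⁻¹ * (x : Grp c d)) ∈ P c d
            rw [key]; exact h1
          rw [dif_pos hc1, dif_pos h1]
          congr 1
          exact Subtype.ext key
        · have hc1 : ¬ (((bP c d : P c d) : Grp c d)⁻¹ * ((⟨_, hk⟩ : P c d) : Grp c d)
              ∈ P c d) := by
            show ¬ ((b c d)⁻¹ * (((b c d) ^ k)⁻¹ * (x : Grp c d)) ∈ P c d)
            rw [key]; exact h1
          rw [dif_neg hc1, dif_neg h1]
      · have h1 : ¬ (((b c d) ^ (k + 1))⁻¹ * (x : Grp c d) ∈ P c d) := by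
          intro hh
          apply hk
          have hkey : ((b c d) ^ k)⁻¹ * (x : Grp c d)
              = b c d * (((b c d) ^ (k + 1))⁻¹ * (x : Grp c d)) := by
            rw [pow_succ]; group
          rw [hkey]
          exact mul_mem (b_mem_P c d) hh
        rw [dif_neg hk, map_zero, dif_neg h1]

omit hT in
lemma grp_key (hd : 0 < d) (y : Grp c d) :
    b c d ^ (d - 1) * (a c d * ((b c d ^ c)⁻¹ * y)) = (b c d)⁻¹ * (a c d * y) := by
  have h1 : b c d * b c d ^ (d - 1) = b c d ^ d := by
    rw [← pow_succ', Nat.sub_add_cancel hd]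
  have h2 : b c d ^ (d - 1) * a c d = (b c d)⁻¹ * (a c d * b c d ^ c) := by
    rw [rel c d, ← h1, mul_assoc, inv_mul_cancel_left]
  calc b c d ^ (d - 1) * (a c d * ((b c d ^ c)⁻¹ * y))
      = (b c d ^ (d - 1) * a c d) * ((b c d ^ c)⁻¹ * y) := by rw [mul_assoc]
    _ = ((b c d)⁻¹ * (a c d * b c d ^ c)) * ((b c d ^ c)⁻¹ * y) := by rw [h2]
    _ = (b c d)⁻¹ * (a c d * y) := by group

end Analysis

set_option maxHeartbeats 2000000 in
open ContinuousLinearMap in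
/-- The operators T_a and T_b on ℓ²(P) (where T is the family of operators determined by
T_x e_y = e_{xy}) are isometries and satisfy: (i) T_a T_b^c = T_b^d T_a;
(ii) (T_b)* T_a = T_b^(d-1) T_a ((T_b)*)^c; and (iii) (T_a)* T_b^j T_a = 0 for 1 ≤ j < d. -/
theorem statement7 (c d : ℕ) (hc : 0 < c) (hd : 0 < d)
    (T : P c d → (l2P c d →L[ℂ] l2P c d))
    (hT : ∀ x y : P c d, T x (lp.single 2 y 1) = lp.single 2 (x * y) 1) :
    adjoint (T (aP c d)) * T (aP c d) = 1 ∧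
    adjoint (T (bP c d)) * T (bP c d) = 1 ∧
    T (aP c d) * T (bP c d) ^ c = T (bP c d) ^ d * T (aP c d) ∧
    adjoint (T (bP c d)) * T (aP c d)
      = T (bP c d) ^ (d - 1) * T (aP c d) * adjoint (T (bP c d)) ^ c ∧
    ∀ j : ℕ, 1 ≤ j → j < d →
      adjoint (T (aP c d)) * T (bP c d) ^ j * T (aP c d) = 0 := by
  have cancel : ∀ x z w : P c d, x * z = x * w → z = w := by
    intro x z w h
    apply Subtype.ext
    have h' : (x : Grp c d) * z = (x : Grp c d) * w := by
      exact_mod_cast congrArg Subtype.val h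
    exact mul_left_cancel h'
  refine ⟨isom T hT (aP c d) (cancel _), isom T hT (bP c d) (cancel _), ?_, ?_, ?_⟩
  · -- (i)
    apply Text
    intro y
    rw [ContinuousLinearMap.mul_apply, ContinuousLinearMap.mul_apply,
      Tpow T hT, hT, hT, Tpow T hT]
    congr 1
    apply Subtype.ext
    show a c d * ((b c d) ^ c * (y : Grp c d)) = (b c d) ^ d * (a c d * (y : Grp c d))
    rw [← mul_assoc, rel c d, mul_assoc]
  · -- (ii)
    apply Text
    intro y
    simp only [ContinuousLinearMap.mul_apply]
    rw [hT, Tadj_single T hT, Tadj_pow T hT]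
    by_cases hcy : ((b c d) ^ c)⁻¹ * (y : Grp c d) ∈ P c d
    · rw [dif_pos hcy, hT, Tpow T hT]
      have hmemval : (b c d) ^ (d - 1) * (a c d * (((b c d) ^ c)⁻¹ * (y : Grp c d)))
          = (b c d)⁻¹ * (a c d * (y : Grp c d)) := grp_key hd _
      have hmem : ((bP c d : P c d) : Grp c d)⁻¹ * ((aP c d * y : P c d) : Grp c d)
          ∈ P c d := by
        show (b c d)⁻¹ * (a c d * (y : Grp c d)) ∈ P c d
        rw [← hmemval]
        exact mul_mem (pow_mem (b_mem_P c d) _) (mul_mem (a_mem_P c d) hcy)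
      rw [dif_pos hmem]
      congr 1
      apply Subtype.ext
      show (b c d)⁻¹ * (a c d * (y : Grp c d))
          = (b c d) ^ (d - 1) * (a c d * (((b c d) ^ c)⁻¹ * (y : Grp c d)))
      rw [hmemval]
    · rw [dif_neg hcy, map_zero, map_zero, dif_neg]
      intro hmem
      have hmem' : (b c d)⁻¹ * (a c d * (y : Grp c d)) ∈ P c d := hmem
      obtain ⟨q, hqP, hyq⟩ := sep1 hc hd y.2 hmem'
      apply hcy
      rw [hyq, inv_mul_cancel_left]
      exact hqP
  · -- (iii)
    intro j hj1 hj2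
    apply Text
    intro y
    rw [ContinuousLinearMap.mul_apply, ContinuousLinearMap.mul_apply, hT,
      Tpow T hT, ContinuousLinearMap.zero_apply]
    apply lp.ext
    funext z
    rw [adj_apply_coord, hT, coord, single_val, if_neg]
    · rfl
    · intro hh
      have hval : a c d * (z : Grp c d)
          = (b c d) ^ j * (a c d * (y : Grp c d)) := by
        have h0 := congrArg Subtype.val hh
        simpa [aP, bP, Submonoid.coe_mul, SubmonoidClass.coe_pow] using h0
      exact sep2 hc hd hj1 hj2 y.2 z.2 hval


end BSpaper
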